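/- Bound on the change of the bridging coefficient under link establishment (the bound 'ΔB_i < 1' used in the proof of Theorem 1, in the stronger true form): let G be a finite simple graph and let i ≠ k be non-adjacent vertices with deg_G(i) ≥ 1. Then B_{G+ik}(i) < B_G(i); in particular the change B_{G+ik}(i) − B_G(i) is less than 1. -/

import Mathlib

open SimpleGraph
open scoped Classical

noncomputable def bridging {V : Type*} [Fintype V] (G : SimpleGraph V) (i : V) : ℝ :=
  (G.degree i : ℝ)⁻¹ / ∑ j ∈ G.neighborFinset i, (G.degree j : ℝ)⁻¹

noncomputable def addE {V : Type*} (G : SimpleGraph V) (i k : V) : SimpleGraph V :=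
  G ⊔ fromEdgeSet {s(i, k)}

noncomputable def delE {V : Type*} (G : SimpleGraph V) (i k : V) : SimpleGraph V :=
  G.deleteEdges {s(i, k)}

noncomputable def cost {V : Type*} [Fintype V] (G : SimpleGraph V) (I : Set V)
    (L : V → V → ℝ) (Γ : ℝ) (i : V) : ℝ :=
  (∑ z ∈ G.neighborFinset i, L i z) + Γ * (∑ j ∈ I.toFinset, (G.dist i j : ℝ))
    + (∑ k ∈ Iᶜ.toFinset, (G.dist i k : ℝ)) + bridging G i

lemma nbhd_i {V : Type*} [Fintype V] (G : SimpleGraph V) (i k : V) (hik : i ≠ k) :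
    (addE G i k).neighborFinset i = insert k (G.neighborFinset i) := by
  ext a
  rw [mem_neighborFinset]
  simp only [mem_neighborFinset, addE, sup_adj, fromEdgeSet_adj, Set.mem_singleton_iff,
    Finset.mem_insert, Sym2.eq, Sym2.rel_iff']
  constructor
  · rintro (h | ⟨h | h, hne⟩)
    · exact Or.inr h
    · simp_all
    · simp_all [Prod.ext_iff]
  · rintro (rfl | h)
    · exact Or.inr ⟨Or.inl rfl, hik⟩
    · exact Or.inl h

lemma nbhd_k {V : Type*} [Fintype V] (G : SimpleGraph V) (i k : V) (hik : i ≠ k) :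
    (addE G i k).neighborFinset k = insert i (G.neighborFinset k) := by
  ext a
  rw [mem_neighborFinset]
  simp only [mem_neighborFinset, addE, sup_adj, fromEdgeSet_adj, Set.mem_singleton_iff,
    Finset.mem_insert, Sym2.eq, Sym2.rel_iff']
  constructor
  · rintro (h | ⟨h | h, hne⟩)
    · exact Or.inr h
    · simp_all [Prod.ext_iff]
    · simp_all [Prod.ext_iff]
  · rintro (rfl | h)
    · exact Or.inr ⟨Or.inr (by simp), hik.symm⟩
    · exact Or.inl h

lemma nbhd_j {V : Type*} [Fintype V] (G : SimpleGraph V) (i k j : V)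
    (hji : j ≠ i) (hjk : j ≠ k) :
    (addE G i k).neighborFinset j = G.neighborFinset j := by
  ext a
  rw [mem_neighborFinset]
  simp only [mem_neighborFinset, addE, sup_adj, fromEdgeSet_adj, Set.mem_singleton_iff,
    Sym2.eq, Sym2.rel_iff']
  constructor
  · rintro (h | ⟨h | h, hne⟩)
    · exact h
    · simp_all [Prod.ext_iff]
    · simp_all [Prod.ext_iff]
  · exact Or.inl

theorem stmt3 {V : Type*} [Fintype V] (G : SimpleGraph V) (i k : V)
    (hik : i ≠ k) (hadj : ¬ G.Adj i k) (hdeg : 1 ≤ G.degree i) :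
    bridging (addE G i k) i < bridging G i ∧
    bridging (addE G i k) i - bridging G i < 1 := by
  have hknm : k ∉ G.neighborFinset i := by simpa [mem_neighborFinset] using hadj
  have hinm : i ∉ G.neighborFinset k := by
    simpa [mem_neighborFinset] using fun h => hadj h.symm
  -- degree facts
  have hdi : (addE G i k).degree i = G.degree i + 1 := by
    simp only [← card_neighborFinset_eq_degree, nbhd_i G i k hik,
      Finset.card_insert_of_notMem hknm]
  have hdk : (addE G i k).degree k = G.degree k + 1 := by
    simp only [← card_neighborFinset_eq_degree, nbhd_k G i k hik,
      Finset.card_insert_of_notMem hinm]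
  have hdj : ∀ j ∈ G.neighborFinset i, (addE G i k).degree j = G.degree j := by
    intro j hj
    have hji : j ≠ i := fun h => G.irrefl (h ▸ (mem_neighborFinset _ _ _).1 hj)
    have hjk : j ≠ k := fun h => hknm (h ▸ hj)
    simp only [← card_neighborFinset_eq_degree, nbhd_j G i k j hji hjk]
  set S : ℝ := ∑ j ∈ G.neighborFinset i, (G.degree j : ℝ)⁻¹ with hS
  have hNne : (G.neighborFinset i).Nonempty := by
    rw [← Finset.card_pos, card_neighborFinset_eq_degree]; omega
  have hSpos : 0 < S := by
    apply Finset.sum_pos _ hNne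
    intro j hj
    have : 0 < G.degree j := by
      rw [← card_neighborFinset_eq_degree, Finset.card_pos]
      exact ⟨i, by simpa [mem_neighborFinset, adj_comm] using hj⟩
    positivity
  have hdpos : (0:ℝ) < (G.degree i : ℝ) := by exact_mod_cast hdeg
  set c : ℝ := ((G.degree k : ℝ) + 1)⁻¹ with hc
  have hcpos : 0 < c := by positivity
  have hsum : ∑ j ∈ (addE G i k).neighborFinset i, ((addE G i k).degree j : ℝ)⁻¹ = c + S := by
    rw [nbhd_i G i k hik, Finset.sum_insert hknm, hdk]
    congr 1
    · push_cast; ring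
    · exact Finset.sum_congr rfl fun j hj => by rw [hdj j hj]
  have hb' : bridging (addE G i k) i = ((G.degree i : ℝ) + 1)⁻¹ / (c + S) := by
    rw [bridging, hsum, hdi]; push_cast; ring_nf
  have hb : bridging G i = (G.degree i : ℝ)⁻¹ / S := rfl
  have key : bridging (addE G i k) i < bridging G i := by
    rw [hb', hb]
    calc ((G.degree i : ℝ) + 1)⁻¹ / (c + S)
        < (G.degree i : ℝ)⁻¹ / (c + S) := by
          apply div_lt_div_of_pos_right _ (by linarith)
          exact inv_strictAnti₀ hdpos (by linarith)
      _ < (G.degree i : ℝ)⁻¹ / S := by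
          apply div_lt_div_of_pos_left (by positivity) hSpos (by linarith)
  exact ⟨key, by linarith⟩
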